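/- For every n ≥ 1, the center of the middle group Mid(B_n) = (Fin n → ℤ) ⋊ Equiv.Perm (Fin n) is the infinite cyclic subgroup generated by the element t_𝟙 = ((1,1,…,1), id), i.e., the translation part equal to the all-ones vector and trivial permutation part. In particular the center is infinite cyclic. -/

import Mathlib

open Multiplicative

/-- The automorphism of `Multiplicative (Fin n → A)` permuting coordinates by `π`. -/
def permMulAut {n : ℕ} {A : Type*} [AddCommGroup A] (π : Equiv.Perm (Fin n)) :
    MulAut (Multiplicative (Fin n → A)) where
  toFun v := ofAdd fun i => toAdd v (π⁻¹ i)
  invFun v := ofAdd fun i => toAdd v (π i)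
  left_inv v := by
    refine Multiplicative.toAdd.injective (funext fun i => ?_)
    simp
  right_inv v := by
    refine Multiplicative.toAdd.injective (funext fun i => ?_)
    simp
  map_mul' a b := rfl

/-- The coordinate-permutation action of `Equiv.Perm (Fin n)` on `Multiplicative (Fin n → A)`. -/
def permAction (n : ℕ) (A : Type*) [AddCommGroup A] :
    Equiv.Perm (Fin n) →* MulAut (Multiplicative (Fin n → A)) where
  toFun := permMulAut
  map_one' := by
    refine MulEquiv.ext fun v => ?_
    refine Multiplicative.toAdd.injective (funext fun i => ?_)
    simp [permMulAut]
  map_mul' π σ := by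
    refine MulEquiv.ext fun v => ?_
    refine Multiplicative.toAdd.injective (funext fun i => ?_)
    simp [permMulAut]

/-- The middle group `Mid(B_n) = (Fin n → ℤ) ⋊ Equiv.Perm (Fin n)`, with a permutation acting
on integer vectors by permuting coordinates. -/
abbrev Mid (n : ℕ) := Multiplicative (Fin n → ℤ) ⋊[permAction n ℤ] Equiv.Perm (Fin n)

/-- The central translation `t_𝟙`: translation part the all-ones vector, trivial permutation. -/
def tOne (n : ℕ) : Mid n := SemidirectProduct.inl (ofAdd fun _ => (1 : ℤ))

lemma tOne_zpow (n : ℕ) (k : ℤ) :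
    (tOne n) ^ k = SemidirectProduct.inl (ofAdd fun _ => k) := by
  rw [tOne, ← map_zpow]
  congr 1
  refine Multiplicative.toAdd.injective (funext fun i => ?_)
  simp

/-- For every `n ≥ 1` (written `n = m + 1`), the center of the middle group `Mid(B_n)` is the
cyclic subgroup generated by the translation `t_𝟙` by the all-ones vector; this element has
infinite order, so the center is infinite cyclic. -/
theorem center_middleGroup (m : ℕ) :
    Subgroup.center (Mid (m + 1)) = Subgroup.zpowers (tOne (m + 1)) ∧
    ¬ IsOfFinOrder (tOne (m + 1)) ∧
    Infinite (Subgroup.center (Mid (m + 1))) := by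
  have hnotfin : ¬ IsOfFinOrder (tOne (m + 1)) := by
    intro h
    obtain ⟨k, hk, hk1⟩ := h.exists_pow_eq_one
    have hk1' : tOne (m+1) ^ (k : ℤ) = 1 := by rwa [zpow_natCast]
    rw [tOne_zpow] at hk1'
    have := congrArg (fun g : Mid (m+1) => toAdd g.left 0) hk1'
    simp at this
    omega
  have hcenter : Subgroup.center (Mid (m + 1)) = Subgroup.zpowers (tOne (m + 1)) := by
    ext g
    constructor
    · intro hg
      rw [Subgroup.mem_center_iff] at hg
      -- π = 1
      have hπ : g.right = 1 := by
        have hw := hg (SemidirectProduct.inl (ofAdd fun j => (j : ℤ)))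
        have hleft := congrArg SemidirectProduct.left hw
        simp only [SemidirectProduct.mul_def, SemidirectProduct.left_inl,
          SemidirectProduct.right_inl, map_one] at hleft
        have h2 := congrArg Multiplicative.toAdd hleft
        simp only [toAdd_mul, permAction, permMulAut, MonoidHom.coe_mk, OneHom.coe_mk,
          MulEquiv.coe_mk, Equiv.coe_fn_mk, toAdd_ofAdd, MulAut.one_apply] at h2
        ext i
        have h3 := congrFun h2 i
        simp only [Pi.add_apply] at h3
        have hval : ((g.right⁻¹ i : Fin (m+1)) : ℤ) = (i : ℤ) := by omega
        have h4 : g.right⁻¹ i = i := Fin.ext (by exact_mod_cast hval)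
        have h5 := congrArg g.right h4
        simp only [Equiv.Perm.inv_def, Equiv.apply_symm_apply] at h5
        exact (congrArg Fin.val h5.symm)
      have hconst : ∀ i, toAdd g.left i = toAdd g.left 0 := by
        intro i
        have hw := hg (SemidirectProduct.inr (Equiv.swap 0 i))
        have hleft := congrArg SemidirectProduct.left hw
        simp only [SemidirectProduct.mul_def, SemidirectProduct.left_inr,
          SemidirectProduct.right_inr, map_one, mul_one, one_mul] at hleft
        have := congrFun (congrArg toAdd hleft) 0
        simpa [permAction, permMulAut, Equiv.swap_inv, Equiv.swap_apply_left] using this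
      refine ⟨toAdd g.left 0, ?_⟩
      show tOne (m+1) ^ (toAdd g.left 0) = g
      rw [tOne_zpow]
      ext : 1
      · refine (funext fun i => ?_)
        exact (hconst i).symm
      · simp [hπ]
    · rintro ⟨k, rfl⟩
      rw [Subgroup.mem_center_iff]
      intro h
      show h * tOne (m+1) ^ k = tOne (m+1) ^ k * h
      rw [tOne_zpow, SemidirectProduct.mul_def, SemidirectProduct.mul_def]
      ext : 1
      · refine Multiplicative.toAdd.injective (funext fun i => ?_)
        simp [SemidirectProduct.left_inl, SemidirectProduct.right_inl, permAction, permMulAut]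
        show toAdd h.left i + k = k + toAdd h.left i
        ring
      · simp [SemidirectProduct.left_inl, SemidirectProduct.right_inl]
  exact ⟨hcenter, hnotfin, by
    rw [hcenter]
    have := infinite_zpowers.2 hnotfin
    exact Set.infinite_coe_iff.2 this⟩
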